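/- Let X be a set and ρ a nonnegative real-valued function on X × X satisfying: (1) ρ(x,y) = ρ(y,x) for all x, y ∈ X; (2) ρ(x,y) = 0 if and only if x = y; (3) ρ(x,z) ≤ 2·max{ρ(x,y), ρ(y,z)} for all x, y, z ∈ X. Then there exists a distance function D on X (a metric) satisfying (1/4)·ρ(x,y) ≤ D(x,y) ≤ ρ(x,y) for all x, y ∈ X. -/
import Mathlib

noncomputable def frinkA {X : Type*} (ρ : X → X → ℝ) (f : ℕ → X) (n : ℕ) : ℝ :=
  ∑ i ∈ Finset.range n, ρ (f i) (f (i + 1))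

noncomputable def frinkB {X : Type*} (ρ : X → X → ℝ) (f : ℕ → X) (n : ℕ) : ℝ :=
  if n ≤ 1 then 2 * frinkA ρ f n
  else 4 * frinkA ρ f n - 2 * ρ (f 0) (f 1) - 2 * ρ (f (n - 1)) (f n)

lemma frinkA_nonneg {X : Type*} (ρ : X → X → ℝ) (hnonneg : ∀ x y, 0 ≤ ρ x y)
    (f : ℕ → X) (n : ℕ) : 0 ≤ frinkA ρ f n :=
  Finset.sum_nonneg fun _ _ => hnonneg _ _

lemma frinkA_succ {X : Type*} (ρ : X → X → ℝ) (f : ℕ → X) (n : ℕ) :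
    frinkA ρ f (n + 1) = frinkA ρ f n + ρ (f n) (f (n + 1)) :=
  Finset.sum_range_succ _ _

lemma frinkA_shift {X : Type*} (ρ : X → X → ℝ) (f : ℕ → X) (k m : ℕ) :
    frinkA ρ f (k + m) = frinkA ρ f k + frinkA ρ (fun i => f (k + i)) m := by
  simp only [frinkA]
  rw [Finset.sum_range_add]
  rfl

lemma frinkB_le {X : Type*} (ρ : X → X → ℝ) (hnonneg : ∀ x y, 0 ≤ ρ x y)
    (f : ℕ → X) (n : ℕ) : frinkB ρ f n ≤ 4 * frinkA ρ f n := by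
  have h := frinkA_nonneg ρ hnonneg f n
  unfold frinkB
  split
  · linarith
  · have h1 := hnonneg (f 0) (f 1)
    have h2 := hnonneg (f (n - 1)) (f n)
    linarith

lemma frinkB_shift {X : Type*} (ρ : X → X → ℝ) (f : ℕ → X) (k m : ℕ) (hk : 1 ≤ k) :
    frinkB ρ (fun i => f (k + i)) (m + 2) = frinkB ρ f (k + (m + 2)) - frinkB ρ f (k + 1) := by
  have h1 := frinkA_shift ρ f k (m + 2)
  have h2 := frinkA_succ ρ f k
  simp only [frinkB]
  rw [if_neg (by omega), if_neg (by omega), if_neg (by omega)]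
  have e1 : m + 2 - 1 = m + 1 := rfl
  have e2 : k + (m + 2) - 1 = k + (m + 1) := rfl
  have e3 : k + 1 - 1 = k := rfl
  rw [e1, e2, e3]
  show 4 * frinkA ρ (fun i => f (k + i)) (m + 2) - 2 * ρ (f (k + 0)) (f (k + 1))
      - 2 * ρ (f (k + (m + 1))) (f (k + (m + 2)))
    = (4 * frinkA ρ f (k + (m + 2)) - 2 * ρ (f 0) (f 1) - 2 * ρ (f (k + (m + 1))) (f (k + (m + 2))))
      - (4 * frinkA ρ f (k + 1) - 2 * ρ (f 0) (f 1) - 2 * ρ (f k) (f (k + 1)))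
  have e4 : k + 0 = k := rfl
  rw [e4]
  linarith

lemma frink_chain {X : Type*} (ρ : X → X → ℝ) (hnonneg : ∀ x y, 0 ≤ ρ x y)
    (hzero : ∀ x, ρ x x = 0)
    (hquasi : ∀ x y z, ρ x z ≤ 2 * max (ρ x y) (ρ y z)) :
    ∀ n (f : ℕ → X), ρ (f 0) (f n) ≤ frinkB ρ f n := by
  intro n
  induction n using Nat.strong_induction_on with
  | _ n ih =>
  intro f
  match n, ih with
  | 0, _ => simp [frinkB, frinkA, hzero]
  | 1, _ =>
    have h := hnonneg (f 0) (f 1)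
    simp [frinkB, frinkA]
    linarith
  | 2, _ =>
    have h := hquasi (f 0) (f 1) (f 2)
    have h1 := hnonneg (f 0) (f 1)
    have h2 := hnonneg (f 1) (f 2)
    have hm : max (ρ (f 0) (f 1)) (ρ (f 1) (f 2)) ≤ ρ (f 0) (f 1) + ρ (f 1) (f 2) :=
      max_le (by linarith) (by linarith)
    simp [frinkB, frinkA, Finset.sum_range_succ]
    linarith
  | (n + 3), ih =>
    classical
    set T := frinkB ρ f (n + 3) with hTdef
    have hT : T = 4 * frinkA ρ f (n + 3) - 2 * ρ (f 0) (f 1)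
        - 2 * ρ (f (n + 2)) (f (n + 3)) := by
      rw [hTdef, frinkB, if_neg (by omega)]
      rfl
    -- basic sum facts
    have hAsucc : frinkA ρ f (n + 3) = frinkA ρ f (n + 2) + ρ (f (n + 2)) (f (n + 3)) :=
      frinkA_succ ρ f (n + 2)
    have hA0 : ρ (f 0) (f 1) ≤ frinkA ρ f (n + 2) := by
      have := Finset.single_le_sum (f := fun i => ρ (f i) (f (i + 1)))
        (fun i _ => hnonneg _ _) (by simp : 0 ∈ Finset.range (n + 2))
      simpa [frinkA] using this
    have hAn : 0 ≤ ρ (f (n + 2)) (f (n + 3)) := hnonneg _ _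
    have hA01 : 0 ≤ ρ (f 0) (f 1) := hnonneg _ _
    rcases lt_or_ge T (4 * ρ (f 0) (f 1)) with hcase | hcase
    · -- Case A : first edge is heavy
      have hshift := frinkB_shift ρ f 1 n (le_refl 1)
      have e : 1 + (n + 2) = n + 3 := by omega
      rw [e] at hshift
      have hr : ρ (f 1) (f (n + 3)) ≤ frinkB ρ (fun i => f (1 + i)) (n + 2) := by
        have := ih (n + 2) (by omega) (fun i => f (1 + i))
        have e2 : 1 + (n + 2) = n + 3 := by omega
        simpa [e2] using this
      have hF2 : frinkB ρ f 2 = 2 * ρ (f 0) (f 1) + 2 * ρ (f 1) (f 2) := by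
        rw [frinkB, if_neg (by omega)]
        simp [frinkA, Finset.sum_range_succ]
        ring
    -- bounds
      have hb1 : 2 * ρ (f 0) (f 1) ≤ T := by
        rw [hT]; linarith
      have hb2 : 2 * ρ (f 1) (f (n + 3)) ≤ T := by
        have h12 := hnonneg (f 1) (f 2)
        rw [hshift, hF2] at hr
        linarith
      have hq := hquasi (f 0) (f 1) (f (n + 3))
      have hm : max (ρ (f 0) (f 1)) (ρ (f 1) (f (n + 3))) ≤ T / 2 :=
        max_le (by linarith) (by linarith)
      linarith
    · -- Case B
      set P : ℕ → Prop := fun j => 2 * frinkB ρ f (j + 1) ≤ T with hPdef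
      have hP0 : P 0 := by
        have : frinkB ρ f 1 = 2 * frinkA ρ f 1 := by rw [frinkB, if_pos (by omega)]
        have hA1 : frinkA ρ f 1 = ρ (f 0) (f 1) := by
          simp [frinkA]
        rw [hPdef]
        simp only []
        rw [this, hA1]
        linarith
      set j0 := Nat.findGreatest P (n + 1) with hj0def
      have hj0P : P j0 := Nat.findGreatest_spec (Nat.zero_le _) hP0
      have hj0le : j0 ≤ n + 1 := Nat.findGreatest_le _
      rcases eq_or_lt_of_le hj0le with hj0eq | hj0lt
      · -- k = n + 2 : split before the last edge
        have hleft : ρ (f 0) (f (n + 2)) ≤ frinkB ρ f (n + 2) := ih (n + 2) (by omega) f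
        have hFk : 2 * frinkB ρ f (n + 2) ≤ T := by
          have := hj0P
          rw [hPdef] at this
          simpa [hj0eq] using this
        have hb2 : 2 * ρ (f (n + 2)) (f (n + 3)) ≤ T := by
          rw [hT]; linarith
        have hq := hquasi (f 0) (f (n + 2)) (f (n + 3))
        have hm : max (ρ (f 0) (f (n + 2))) (ρ (f (n + 2)) (f (n + 3))) ≤ T / 2 :=
          max_le (by linarith) (by linarith)
        linarith
      · -- k = j0 + 1 ≤ n + 1
        set k := j0 + 1 with hkdef
        have hnotP : ¬ P (j0 + 1) := by
          apply Nat.findGreatest_is_greatest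
          · rw [← hj0def]; omega
          · omega
        have hFk1 : T < 2 * frinkB ρ f (k + 1) := by
          by_contra hcon
          push_neg at hcon
          exact hnotP hcon
        have hFk : 2 * frinkB ρ f k ≤ T := hj0P
        -- right chain: length (n - j0) + 2 ≥ 2
        have hshift := frinkB_shift ρ f k (n - j0) (by omega)
        have e : k + (n - j0 + 2) = n + 3 := by omega
        rw [e] at hshift
        have hr : ρ (f k) (f (n + 3)) ≤ frinkB ρ (fun i => f (k + i)) (n - j0 + 2) := by
          have := ih (n - j0 + 2) (by omega) (fun i => f (k + i))
          simpa [e] using this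
        have hl : ρ (f 0) (f k) ≤ frinkB ρ f k := ih k (by omega) f
        have hb2 : 2 * ρ (f k) (f (n + 3)) ≤ T := by
          rw [hshift] at hr
          linarith
        have hq := hquasi (f 0) (f k) (f (n + 3))
        have hm : max (ρ (f 0) (f k)) (ρ (f k) (f (n + 3))) ≤ T / 2 :=
          max_le (by linarith) (by linarith)
        linarith

lemma frink_chain' {X : Type*} (ρ : X → X → ℝ) (hnonneg : ∀ x y, 0 ≤ ρ x y)
    (hzero : ∀ x, ρ x x = 0)
    (hquasi : ∀ x y z, ρ x z ≤ 2 * max (ρ x y) (ρ y z)) (n : ℕ) (f : ℕ → X) :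
    ρ (f 0) (f n) ≤ 4 * frinkA ρ f n :=
  le_trans (frink_chain ρ hnonneg hzero hquasi n f) (frinkB_le ρ hnonneg f n)

lemma frinkA_reverse {X : Type*} (ρ : X → X → ℝ) (hsymm : ∀ x y, ρ x y = ρ y x)
    (f : ℕ → X) (n : ℕ) :
    frinkA ρ (fun i => f (n - i)) n = frinkA ρ f n := by
  have hcongr : ∀ i ∈ Finset.range n,
      ρ (f (n - i)) (f (n - (i + 1))) = ρ (f (n - 1 - i)) (f (n - 1 - i + 1)) := by
    intro i hi
    rw [Finset.mem_range] at hi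
    have h1 : n - (i + 1) = n - 1 - i := by omega
    have h2 : n - i = n - 1 - i + 1 := by omega
    rw [h1, h2, hsymm]
  show (∑ i ∈ Finset.range n, ρ (f (n - i)) (f (n - (i + 1)))) = frinkA ρ f n
  rw [Finset.sum_congr rfl hcongr,
    Finset.sum_range_reflect (fun j => ρ (f j) (f (j + 1))) n]
  rfl

lemma frinkA_concat {X : Type*} (ρ : X → X → ℝ) (f g : ℕ → X) (n m : ℕ)
    (hfg : f n = g 0) :
    frinkA ρ (fun i => if i ≤ n then f i else g (i - n)) (n + m)
      = frinkA ρ f n + frinkA ρ g m := by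
  set h : ℕ → X := fun i => if i ≤ n then f i else g (i - n) with hhdef
  have hg : ∀ j, h (n + j) = g j := by
    intro j
    match j with
    | 0 => simp [hhdef, hfg]
    | j + 1 =>
      have hc : ¬ (n + (j + 1) ≤ n) := by omega
      have he : n + (j + 1) - n = j + 1 := by omega
      simp [hhdef, hc, he]
  simp only [frinkA]
  show (∑ i ∈ Finset.range (n + m), ρ (h i) (h (i + 1))) = _
  rw [Finset.sum_range_add]
  congr 1
  · apply Finset.sum_congr rfl
    intro i hi
    rw [Finset.mem_range] at hi
    have e1 : i ≤ n := by omega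
    have e2 : i + 1 ≤ n := by omega
    have h1 : h i = f i := by simp [hhdef, e1]
    have h2 : h (i + 1) = f (i + 1) := by simp [hhdef, e2]
    rw [h1, h2]
  · apply Finset.sum_congr rfl
    intro i _
    have h2 : h (n + i + 1) = g (i + 1) := hg (i + 1)
    rw [hg i, h2]

/-- **Frink's metrization lemma.** If a nonnegative symmetric function `ρ` vanishes exactly
on the diagonal and satisfies `ρ(x,z) ≤ 2 max{ρ(x,y), ρ(y,z)}`, then there is a metric `D`
with `ρ/4 ≤ D ≤ ρ`. -/
theorem frink_metrization
    {X : Type*} (ρ : X → X → ℝ) (hnonneg : ∀ x y, 0 ≤ ρ x y)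
    (hsymm : ∀ x y, ρ x y = ρ y x) (heq : ∀ x y, ρ x y = 0 ↔ x = y)
    (hquasi : ∀ x y z, ρ x z ≤ 2 * max (ρ x y) (ρ y z)) :
    ∃ D : X → X → ℝ, (∀ x y, 0 ≤ D x y) ∧ (∀ x y, D x y = D y x) ∧
      (∀ x y, D x y = 0 ↔ x = y) ∧ (∀ x y z, D x z ≤ D x y + D y z) ∧
      ∀ x y, ρ x y / 4 ≤ D x y ∧ D x y ≤ ρ x y := by
  classical
  have hzero : ∀ x, ρ x x = 0 := fun x => (heq x x).mpr rfl
  set C : X → X → Set ℝ :=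
    fun x y => {s | ∃ n, ∃ f : ℕ → X, f 0 = x ∧ f n = y ∧ frinkA ρ f n = s} with hCdef
  have hmem : ∀ x y, ρ x y ∈ C x y := by
    intro x y
    refine ⟨1, fun i => if i = 0 then x else y, by simp, by simp, ?_⟩
    simp [frinkA, Finset.sum_range_one]
  have hlb : ∀ x y, ∀ s ∈ C x y, ρ x y / 4 ≤ s := by
    rintro x y s ⟨n, f, hf0, hfn, rfl⟩
    have := frink_chain' ρ hnonneg hzero hquasi n f
    rw [hf0, hfn] at this
    linarith
  have h0 : ∀ x y, ∀ s ∈ C x y, (0 : ℝ) ≤ s := by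
    rintro x y s ⟨n, f, _, _, rfl⟩
    exact frinkA_nonneg ρ hnonneg f n
  have hbdd : ∀ x y, BddBelow (C x y) := fun x y => ⟨0, h0 x y⟩
  have hne : ∀ x y, (C x y).Nonempty := fun x y => ⟨ρ x y, hmem x y⟩
  have hsub : ∀ x y, C x y ⊆ C y x := by
    rintro x y s ⟨n, f, hf0, hfn, rfl⟩
    refine ⟨n, fun i => f (n - i), ?_, ?_, ?_⟩
    · simpa using hfn
    · simpa using hf0
    · exact frinkA_reverse ρ hsymm f n
  refine ⟨fun x y => sInf (C x y), ?_, ?_, ?_, ?_, ?_⟩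
  · intro x y
    exact le_csInf (hne x y) (h0 x y)
  · intro x y
    exact le_antisymm (csInf_le_csInf (hbdd x y) (hne y x) (hsub y x))
      (csInf_le_csInf (hbdd y x) (hne x y) (hsub x y))
  · intro x y
    constructor
    · intro hD
      have h1 : ρ x y / 4 ≤ 0 := hD ▸ le_csInf (hne x y) (hlb x y)
      have h2 := hnonneg x y
      have : ρ x y = 0 := by linarith
      exact (heq x y).mp this
    · rintro rfl
      have hz : (0 : ℝ) ∈ C x x := ⟨0, fun _ => x, rfl, rfl, by simp [frinkA]⟩
      exact le_antisymm (csInf_le (hbdd x x) hz) (le_csInf (hne x x) (h0 x x))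
  · intro x y z
    have key : ∀ s ∈ C x y, ∀ t ∈ C y z, sInf (C x z) ≤ s + t := by
      rintro s ⟨n, f, hf0, hfn, rfl⟩ t ⟨m, g, hg0, hgm, rfl⟩
      have hfg : f n = g 0 := hfn.trans hg0.symm
      have hcat := frinkA_concat ρ f g n m hfg
      refine csInf_le (hbdd x z) ⟨n + m, fun i => if i ≤ n then f i else g (i - n), ?_, ?_, hcat⟩
      · simp [hf0]
      · rcases Nat.eq_zero_or_pos m with hm | hm
        · subst hm
          simpa using hfg.trans hgm
        · have hc : ¬ (n + m ≤ n) := by omega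
          have he : n + m - n = m := by omega
          simp [hc, he, hgm]
    have h1 : ∀ s ∈ C x y, sInf (C x z) - s ≤ sInf (C y z) := by
      intro s hs
      refine le_csInf (hne y z) fun t ht => ?_
      have := key s hs t ht
      linarith
    have h2 : sInf (C x z) - sInf (C y z) ≤ sInf (C x y) := by
      refine le_csInf (hne x y) fun s hs => ?_
      have := h1 s hs
      linarith
    linarith
  · intro x y
    exact ⟨le_csInf (hne x y) (hlb x y), csInf_le (hbdd x y) (hmem x y)⟩
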